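/- Let D be the triangular fuzzy variable (r1,r2,r4) with 0 < r1 < r2 < r4 and let λ ∈ [0,1]. Then E_λ(1/D) = ∫_0^∞ m_λ(D ≤ 1/r) dr = (λ/(r2 − r1))·ln(r2/r1) + ((1 − λ)/(r4 − r2))·ln(r4/r2). -/

import Mathlib

open MeasureTheory Set

/-- Possibility measure of an event `A` built from membership function `μ`
(with the convention `sSup ∅ = 0`, which holds for `Real.sSup`). -/
noncomputable def Pos (μ : ℝ → ℝ) (A : Set ℝ) : ℝ := sSup (μ '' A)

/-- Necessity measure associated with `μ`. -/
noncomputable def Nec (μ : ℝ → ℝ) (A : Set ℝ) : ℝ := 1 - Pos μ Aᶜ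

/-- The parametric measure `m_λ(A) = λ·Pos(A) + (1−λ)·Nec(A)`. -/
noncomputable def mMeas (l : ℝ) (μ : ℝ → ℝ) (A : Set ℝ) : ℝ :=
  l * Pos μ A + (1 - l) * Nec μ A

/-- The `m_λ`-expected value of the fuzzy variable with membership function `μ`:
`E_λ(ξ) = ∫_{−∞}^0 (m_λ([r,∞)) − 1) dr + ∫_0^∞ m_λ([r,∞)) dr`. -/
noncomputable def Eexp (l : ℝ) (μ : ℝ → ℝ) : ℝ :=
  (∫ r in Set.Iic (0:ℝ), (mMeas l μ (Set.Ici r) - 1)) +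
  (∫ r in Set.Ioi (0:ℝ), mMeas l μ (Set.Ici r))

/-- Membership function of the trapezoidal fuzzy variable `(r1,r2,r3,r4)`. -/
noncomputable def trapMF (r1 r2 r3 r4 : ℝ) : ℝ → ℝ := fun x =>
  if r1 ≤ x ∧ x ≤ r2 then (x - r1) / (r2 - r1)
  else if r2 ≤ x ∧ x ≤ r3 then 1
  else if r3 ≤ x ∧ x ≤ r4 then (r4 - x) / (r4 - r3)
  else 0

/-- Membership function of the triangular fuzzy variable `(r1,r2,r4)`. -/
noncomputable def triMF (r1 r2 r4 : ℝ) : ℝ → ℝ := fun x =>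
  if r1 ≤ x ∧ x ≤ r2 then (x - r1) / (r2 - r1)
  else if r2 ≤ x ∧ x ≤ r4 then (r4 - x) / (r4 - r2)
  else 0

/-- Membership function of the trapezoidal fuzzy variable `(a−α, a, b, b+β)`. -/
noncomputable def trapMF2 (a b α β : ℝ) : ℝ → ℝ := fun x =>
  if a - α ≤ x ∧ x ≤ a then 1 - (a - x) / α
  else if a ≤ x ∧ x ≤ b then 1
  else if b ≤ x ∧ x ≤ b + β then 1 - (x - b) / β
  else 0

/-- Membership function of the triangular fuzzy variable `(a−α, a, a+β)`. -/
noncomputable def triMF2 (a α β : ℝ) : ℝ → ℝ := fun x =>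
  if a - α ≤ x ∧ x ≤ a then 1 - (a - x) / α
  else if a ≤ x ∧ x ≤ a + β then 1 - (x - a) / β
  else 0

section Aux
variable {r1 r2 r4 t l : ℝ}

variable {r1 r2 r4 t : ℝ}

lemma triMF_nonneg (h12 : r1 < r2) (h24 : r2 < r4) (x : ℝ) :
    0 ≤ triMF r1 r2 r4 x := by
  unfold triMF
  split_ifs with h1 h2
  · exact div_nonneg (by linarith [h1.1]) (by linarith)
  · exact div_nonneg (by linarith [h2.2]) (by linarith)
  · exact le_refl 0

lemma triMF_le_one (h12 : r1 < r2) (h24 : r2 < r4) (x : ℝ) :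
    triMF r1 r2 r4 x ≤ 1 := by
  unfold triMF
  split_ifs with h1 h2
  · rw [div_le_one (by linarith)]; linarith [h1.2]
  · rw [div_le_one (by linarith)]; linarith [h2.1]
  · norm_num

lemma posIic_lt (h12 : r1 < r2) (h24 : r2 < r4) (ht : t < r1) :
    sSup (triMF r1 r2 r4 '' Iic t) = 0 := by
  apply IsGreatest.csSup_eq
  constructor
  · refine ⟨t, mem_Iic.2 le_rfl, ?_⟩
    unfold triMF
    rw [if_neg (by push_neg; intro h; linarith), if_neg (by push_neg; intro h; linarith)]
  · rintro y ⟨x, hx, rfl⟩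
    simp only [mem_Iic] at hx
    unfold triMF
    rw [if_neg (by push_neg; intro h; linarith), if_neg (by push_neg; intro h; linarith)]

lemma posIic_mid (h12 : r1 < r2) (h24 : r2 < r4) (ht1 : r1 ≤ t) (ht2 : t ≤ r2) :
    sSup (triMF r1 r2 r4 '' Iic t) = (t - r1) / (r2 - r1) := by
  apply IsGreatest.csSup_eq
  constructor
  · refine ⟨t, mem_Iic.2 le_rfl, ?_⟩
    unfold triMF
    rw [if_pos ⟨ht1, ht2⟩]
  · rintro y ⟨x, hx, rfl⟩
    simp only [mem_Iic] at hx
    unfold triMF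
    split_ifs with h1 h2
    · rw [div_le_div_iff_of_pos_right (by linarith)]; linarith
    · push_neg at h1; exfalso; linarith [h1 (by linarith [h2.1]), h2.1]
    · exact div_nonneg (by linarith) (by linarith)

lemma posIic_ge (h12 : r1 < r2) (h24 : r2 < r4) (ht : r2 ≤ t) :
    sSup (triMF r1 r2 r4 '' Iic t) = 1 := by
  apply IsGreatest.csSup_eq
  constructor
  · refine ⟨r2, mem_Iic.2 ht, ?_⟩
    unfold triMF
    rw [if_pos ⟨le_of_lt h12, le_rfl⟩, div_self (by linarith)]
  · rintro y ⟨x, _, rfl⟩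
    exact triMF_le_one h12 h24 x

lemma posIoi_lt (h12 : r1 < r2) (h24 : r2 < r4) (ht : t < r2) :
    sSup (triMF r1 r2 r4 '' Ioi t) = 1 := by
  apply IsGreatest.csSup_eq
  constructor
  · refine ⟨r2, mem_Ioi.2 ht, ?_⟩
    unfold triMF
    rw [if_pos ⟨le_of_lt h12, le_rfl⟩, div_self (by linarith)]
  · rintro y ⟨x, _, rfl⟩
    exact triMF_le_one h12 h24 x

lemma posIoi_ge (h12 : r1 < r2) (h24 : r2 < r4) (ht : r4 ≤ t) :
    sSup (triMF r1 r2 r4 '' Ioi t) = 0 := by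
  apply IsGreatest.csSup_eq
  constructor
  · refine ⟨t + 1, mem_Ioi.2 (by linarith), ?_⟩
    unfold triMF
    rw [if_neg (by push_neg; intro h; linarith), if_neg (by push_neg; intro h; linarith)]
  · rintro y ⟨x, hx, rfl⟩
    simp only [mem_Ioi] at hx
    unfold triMF
    rw [if_neg (by push_neg; intro h; linarith), if_neg (by push_neg; intro h; linarith)]

lemma posIoi_mid (h12 : r1 < r2) (h24 : r2 < r4) (ht1 : r2 ≤ t) (ht2 : t < r4) :
    sSup (triMF r1 r2 r4 '' Ioi t) = (r4 - t) / (r4 - r2) := by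
  apply IsLUB.csSup_eq
  · constructor
    · rintro y ⟨x, hx, rfl⟩
      simp only [mem_Ioi] at hx
      unfold triMF
      split_ifs with h1 h2
      · exfalso; linarith [h1.2]
      · rw [div_le_div_iff_of_pos_right (by linarith)]; linarith
      · exact div_nonneg (by linarith) (by linarith)
    · intro b hb
      by_contra hbv
      push_neg at hbv
      set v : ℝ := (r4 - t) / (r4 - r2) with hv
      set m : ℝ := max b 0 with hm
      have hmv : m < v := max_lt hbv (div_pos (by linarith) (by linarith))
      set w : ℝ := (m + v) / 2 with hw
      have hw0 : 0 ≤ w := by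
        have : (0:ℝ) ≤ m := le_max_right b 0
        have : 0 < v := div_pos (by linarith) (by linarith)
        simp only [hw]; linarith
      have hwv : w < v := by simp only [hw]; linarith
      have hbw : b < w := by
        have : b ≤ m := le_max_left b 0
        simp only [hw]; linarith
      have hv1 : v ≤ 1 := by
        rw [div_le_one (by linarith)]; linarith
      set x : ℝ := r4 - w * (r4 - r2) with hx
      have hxr2 : r2 < x := by
        have : w * (r4 - r2) < 1 * (r4 - r2) := by
          apply mul_lt_mul_of_pos_right (lt_of_lt_of_le hwv hv1) (by linarith)
        simp only [hx]; linarith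
      have hxt : t < x := by
        have : w * (r4 - r2) < v * (r4 - r2) := by
          apply mul_lt_mul_of_pos_right hwv (by linarith)
        have hv4 : v * (r4 - r2) = r4 - t :=
          div_mul_cancel₀ _ (by linarith : r4 - r2 ≠ 0)
        simp only [hx]; linarith
      have hxr4 : x ≤ r4 := by
        have : 0 ≤ w * (r4 - r2) := mul_nonneg hw0 (by linarith)
        simp only [hx]; linarith
      have hμx : triMF r1 r2 r4 x = w := by
        unfold triMF
        rw [if_neg (by push_neg; intro h; linarith), if_pos ⟨le_of_lt hxr2, hxr4⟩]
        simp only [hx, sub_sub_cancel]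
        exact mul_div_cancel_right₀ w (by linarith : r4 - r2 ≠ 0)
      have := hb ⟨x, mem_Ioi.2 hxt, hμx⟩
      linarith
  · exact ⟨triMF r1 r2 r4 (t+1), ⟨t + 1, mem_Ioi.2 (by linarith), rfl⟩⟩

end Aux

section Aux2
variable {r1 r2 r4 t l : ℝ}

lemma mIic_ge (h12 : r1 < r2) (h24 : r2 < r4) (ht : r4 ≤ t) :
    mMeas l (triMF r1 r2 r4) (Iic t) = 1 := by
  unfold mMeas Pos Nec Pos
  rw [compl_Iic, posIic_ge h12 h24 (by linarith), posIoi_ge h12 h24 ht]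
  ring

lemma mIic_mid2 (h12 : r1 < r2) (h24 : r2 < r4) (ht1 : r2 ≤ t) (ht2 : t < r4) :
    mMeas l (triMF r1 r2 r4) (Iic t) = l + (1 - l) * ((t - r2) / (r4 - r2)) := by
  unfold mMeas Pos Nec Pos
  rw [compl_Iic, posIic_ge h12 h24 ht1, posIoi_mid h12 h24 ht1 ht2]
  have h : r4 - r2 ≠ 0 := by linarith
  field_simp
  ring

lemma mIic_mid1 (h12 : r1 < r2) (h24 : r2 < r4) (ht1 : r1 ≤ t) (ht2 : t < r2) :
    mMeas l (triMF r1 r2 r4) (Iic t) = l * ((t - r1) / (r2 - r1)) := by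
  unfold mMeas Pos Nec Pos
  rw [compl_Iic, posIic_mid h12 h24 ht1 (le_of_lt ht2), posIoi_lt h12 h24 ht2]
  ring

lemma mIic_lt (h12 : r1 < r2) (h24 : r2 < r4) (ht : t < r1) :
    mMeas l (triMF r1 r2 r4) (Iic t) = 0 := by
  unfold mMeas Pos Nec Pos
  rw [compl_Iic, posIic_lt h12 h24 ht, posIoi_lt h12 h24 (by linarith)]
  ring

lemma intervalIntegrable_affine_inv (a b c0 c1 : ℝ) (ha : 0 < a) (hab : a ≤ b) :
    IntervalIntegrable (fun r => c0 + c1 * r⁻¹) volume a b := by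
  have hne : ∀ x : ℝ, x ∈ Set.uIcc a b → x ≠ 0 := by
    intro x hx
    rw [uIcc_of_le hab] at hx
    exact ne_of_gt (lt_of_lt_of_le ha hx.1)
  exact intervalIntegrable_const.add
    ((intervalIntegral.intervalIntegrable_inv hne continuousOn_id).const_mul c1)

open intervalIntegral in
lemma int_affine_inv (a b c0 c1 : ℝ) (ha : 0 < a) (hab : a ≤ b) :
    ∫ r in Ioc a b, (c0 + c1 * r⁻¹) = c0 * (b - a) + c1 * Real.log (b / a) := by
  have hne : ∀ x : ℝ, x ∈ Set.uIcc a b → x ≠ 0 := by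
    intro x hx
    rw [uIcc_of_le hab] at hx
    exact ne_of_gt (lt_of_lt_of_le ha hx.1)
  rw [← intervalIntegral.integral_of_le hab,
    intervalIntegral.integral_add intervalIntegrable_const
      ((intervalIntegral.intervalIntegrable_inv hne continuousOn_id).const_mul c1),
    intervalIntegral.integral_const_mul, intervalIntegral.integral_const,
    integral_inv (by intro h; exact hne 0 h rfl)]
  simp [mul_comm]

end Aux2

theorem stmt_8 (r1 r2 r4 l : ℝ)
    (h0 : 0 < r1) (h12 : r1 < r2) (h24 : r2 < r4)
    (hl : l ∈ Set.Icc (0:ℝ) 1) :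
    (∫ r in Set.Ioi (0:ℝ), mMeas l (triMF r1 r2 r4) (Set.Iic (1 / r))) =
      l / (r2 - r1) * Real.log (r2 / r1) + (1 - l) / (r4 - r2) * Real.log (r4 / r2) := by
  have h02 : 0 < r2 := h0.trans h12
  have h04 : 0 < r4 := h02.trans h24
  set f : ℝ → ℝ := fun r => mMeas l (triMF r1 r2 r4) (Set.Iic (1 / r)) with hf
  set A : ℝ := 1 / r4 with hA'
  set B : ℝ := 1 / r2 with hB'
  set C : ℝ := 1 / r1 with hC'
  have hA : 0 < A := by positivity
  have hAB : A < B := one_div_lt_one_div_of_lt h02 h24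
  have hBC : B < C := one_div_lt_one_div_of_lt h0 h12
  set c02 : ℝ := l - (1 - l) * r2 / (r4 - r2) with hc02
  set c12 : ℝ := (1 - l) / (r4 - r2) with hc12
  set c03 : ℝ := -(l * r1 / (r2 - r1)) with hc03
  set c13 : ℝ := l / (r2 - r1) with hc13
  -- pointwise identification of f on the four pieces
  have e1 : EqOn f (fun _ => (1:ℝ)) (Ioc 0 A) := by
    intro r hr
    have hr0 : 0 < r := hr.1
    have h4r : r4 ≤ 1 / r := by
      rw [le_div_iff₀ hr0]
      have := (le_div_iff₀ h04).1 hr.2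
      linarith
    exact mIic_ge h12 h24 h4r
  have e2 : EqOn f (fun r => c02 + c12 * r⁻¹) (Ioc A B) := by
    intro r hr
    have hr0 : 0 < r := hA.trans hr.1
    have ht1 : r2 ≤ 1 / r := by
      rw [le_div_iff₀ hr0]
      have := (le_div_iff₀ h02).1 hr.2
      linarith
    have ht2 : 1 / r < r4 := by
      rw [div_lt_iff₀ hr0]
      have := (div_lt_iff₀ h04).1 hr.1
      linarith
    show mMeas l (triMF r1 r2 r4) (Set.Iic (1 / r)) = _
    rw [mIic_mid2 h12 h24 ht1 ht2, hc02, hc12]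
    have h42 : r4 - r2 ≠ 0 := by linarith
    field_simp
    ring
  have e3 : EqOn f (fun r => c03 + c13 * r⁻¹) (Ioc B C) := by
    intro r hr
    have hr0 : 0 < r := (hA.trans hAB).trans hr.1
    have ht1 : r1 ≤ 1 / r := by
      rw [le_div_iff₀ hr0]
      have := (le_div_iff₀ h0).1 hr.2
      linarith
    have ht2 : 1 / r < r2 := by
      rw [div_lt_iff₀ hr0]
      have := (div_lt_iff₀ h02).1 hr.1
      linarith
    show mMeas l (triMF r1 r2 r4) (Set.Iic (1 / r)) = _
    rw [mIic_mid1 h12 h24 ht1 ht2, hc03, hc13]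
    have h21 : r2 - r1 ≠ 0 := by linarith
    field_simp
    ring
  have e4 : EqOn f (fun _ => (0:ℝ)) (Ioi C) := by
    intro r hr
    have hr0 : 0 < r := (hA.trans (hAB.trans hBC)).trans hr
    have ht : 1 / r < r1 := by
      rw [div_lt_iff₀ hr0]
      have := (div_lt_iff₀ h0).1 (mem_Ioi.1 hr)
      linarith
    exact mIic_lt h12 h24 ht
  -- integrability on the pieces
  have i1 : IntegrableOn f (Ioc 0 A) := by
    rw [integrableOn_congr_fun e1 measurableSet_Ioc]
    exact integrableOn_const measure_Ioc_lt_top.ne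
  have i2 : IntegrableOn f (Ioc A B) := by
    rw [integrableOn_congr_fun e2 measurableSet_Ioc]
    exact (intervalIntegrable_iff_integrableOn_Ioc_of_le hAB.le).1
      (intervalIntegrable_affine_inv A B c02 c12 hA hAB.le)
  have i3 : IntegrableOn f (Ioc B C) := by
    rw [integrableOn_congr_fun e3 measurableSet_Ioc]
    exact (intervalIntegrable_iff_integrableOn_Ioc_of_le hBC.le).1
      (intervalIntegrable_affine_inv B C c03 c13 (hA.trans hAB) hBC.le)
  have i4 : IntegrableOn f (Ioi C) := by
    rw [integrableOn_congr_fun e4 measurableSet_Ioi]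
    exact integrableOn_zero
  -- split the integral
  have hsplit : (∫ r in Set.Ioi (0:ℝ), f r) =
      (∫ r in Ioc 0 A, f r) + ((∫ r in Ioc A B, f r) +
        ((∫ r in Ioc B C, f r) + (∫ r in Ioi C, f r))) := by
    have d1 : Disjoint (Ioc (0:ℝ) A) (Ioc A B ∪ (Ioc B C ∪ Ioi C)) := by
      rw [Ioc_union_Ioi_eq_Ioi hBC.le, Ioc_union_Ioi_eq_Ioi hAB.le]
      exact Ioc_disjoint_Ioi le_rfl
    have d2 : Disjoint (Ioc A B) (Ioc B C ∪ Ioi C) := by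
      rw [Ioc_union_Ioi_eq_Ioi hBC.le]
      exact Ioc_disjoint_Ioi le_rfl
    rw [← Ioc_union_Ioi_eq_Ioi hA.le, ← Ioc_union_Ioi_eq_Ioi hAB.le,
      ← Ioc_union_Ioi_eq_Ioi hBC.le,
      setIntegral_union d1 (measurableSet_Ioc.union (measurableSet_Ioc.union measurableSet_Ioi))
        i1 (i2.union (i3.union i4)),
      setIntegral_union d2 (measurableSet_Ioc.union measurableSet_Ioi) i2 (i3.union i4),
      setIntegral_union (Ioc_disjoint_Ioi le_rfl) measurableSet_Ioi i3 i4]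
  rw [hsplit]
  -- evaluate each piece
  have v1 : (∫ r in Ioc 0 A, f r) = A := by
    rw [setIntegral_congr_fun measurableSet_Ioc e1, setIntegral_const, smul_eq_mul, mul_one,
      measureReal_def, Real.volume_Ioc, sub_zero, ENNReal.toReal_ofReal hA.le]
  have v2 : (∫ r in Ioc A B, f r) = c02 * (B - A) + c12 * Real.log (B / A) := by
    rw [setIntegral_congr_fun measurableSet_Ioc e2]
    exact int_affine_inv A B c02 c12 hA hAB.le
  have v3 : (∫ r in Ioc B C, f r) = c03 * (C - B) + c13 * Real.log (C / B) := by
    rw [setIntegral_congr_fun measurableSet_Ioc e3]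
    exact int_affine_inv B C c03 c13 (hA.trans hAB) hBC.le
  have v4 : (∫ r in Ioi C, f r) = 0 := by
    rw [setIntegral_congr_fun measurableSet_Ioi e4]
    simp
  rw [v1, v2, v3, v4]
  have hBA : B / A = r4 / r2 := by
    rw [hA', hB']; field_simp
  have hCB : C / B = r2 / r1 := by
    rw [hB', hC']; field_simp
  rw [hBA, hCB, hA', hB', hC', hc02, hc12, hc03, hc13]
  have h42 : r4 - r2 ≠ 0 := by linarith
  have h21 : r2 - r1 ≠ 0 := by linarith
  field_simp
  ring
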